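/- For any symmetric positive definite d×d matrices G and H with H ⪯ G, it holds that G ⪯ (1 + tr(H⁻¹(G − H)))·H. Moreover, if additionally G ⪯ ηH for some η ≥ 1, then tr(H⁻¹(G − H)) ≤ d(η − 1). -/

import Mathlib

open Matrix

variable {n : Type*} [Fintype n] [DecidableEq n]

lemma aux_trace_nonneg {A : Matrix n n ℝ} (hA : A.PosSemidef) : 0 ≤ A.trace := by
  rw [Matrix.trace]
  refine Finset.sum_nonneg fun i _ => ?_
  have := hA.dotProduct_mulVec_nonneg (Pi.single i 1)
  simpa [dotProduct, mulVec, Pi.single_apply] using this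

lemma psd_sub_le_trace {A : Matrix n n ℝ} (hA : A.PosSemidef) :
    (A.trace • (1 : Matrix n n ℝ) - A).PosSemidef := by
  obtain ⟨R, rfl⟩ : ∃ R : Matrix n n ℝ, A = Rᴴ * R := by
    open scoped MatrixOrder in
    exact ⟨CFC.sqrt A, by rw [(CFC.sqrt_nonneg A).posSemidef.isHermitian.eq, CFC.sqrt_mul_sqrt_self A hA.nonneg]⟩
  refine .of_dotProduct_mulVec_nonneg ?_ ?_
  · have h1 : ((Rᴴ * R).trace • (1 : Matrix n n ℝ)).IsHermitian := by
      simp [Matrix.IsHermitian]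
    exact h1.sub (isHermitian_conjTranspose_mul_self R)
  · intro x
    have e1 : x ⬝ᵥ ((Rᴴ * R) *ᵥ x) = (R *ᵥ x) ⬝ᵥ (R *ᵥ x) := by
      rw [← mulVec_mulVec, dotProduct_mulVec, vecMul_conjTranspose]
      simp
    have e2 : (Rᴴ * R).trace = ∑ i, ∑ j, (R i j)^2 := by
      rw [Matrix.trace]
      simp only [Matrix.diag, Matrix.mul_apply, conjTranspose_apply, sq, star_trivial]
      rw [Finset.sum_comm]
    have e3 : (R *ᵥ x) ⬝ᵥ (R *ᵥ x) = ∑ i, (∑ j, R i j * x j)^2 := by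
      simp [dotProduct, mulVec, sq]
    have e4 : ∑ i, (∑ j, R i j * x j)^2 ≤ (∑ i, ∑ j, (R i j)^2) * (∑ j, (x j)^2) := by
      rw [Finset.sum_mul]
      exact Finset.sum_le_sum fun i _ =>
        Finset.sum_mul_sq_le_sq_mul_sq Finset.univ (R i) x
    have e5 : x ⬝ᵥ x = ∑ j, (x j)^2 := by simp [dotProduct, sq]
    have key : x ⬝ᵥ ((Rᴴ * R) *ᵥ x) ≤ (Rᴴ * R).trace * (x ⬝ᵥ x) := by
      rw [e1, e3, e2, e5]; exact e4
    have : star x ⬝ᵥ (((Rᴴ * R).trace • (1 : Matrix n n ℝ) - Rᴴ * R) *ᵥ x)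
        = (Rᴴ * R).trace * (x ⬝ᵥ x) - x ⬝ᵥ ((Rᴴ * R) *ᵥ x) := by
      rw [sub_mulVec, dotProduct_sub, smul_mulVec, one_mulVec]
      simp [smul_eq_mul]
    rw [this]
    linarith

theorem loewner_bound_from_sigma {d : ℕ}
    (G H : Matrix (Fin d) (Fin d) ℝ) (hG : G.PosDef) (hH : H.PosDef)
    (hHG : (G - H).PosSemidef) :
    (((1 + (H⁻¹ * (G - H)).trace) • H - G).PosSemidef) ∧
      (∀ η : ℝ, 1 ≤ η → (η • H - G).PosSemidef →
        (H⁻¹ * (G - H)).trace ≤ d * (η - 1)) := by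
  classical
  set M := G - H with hM
  have hS0 := hH.posSemidef
  open scoped MatrixOrder in set S := CFC.sqrt H with hSdef
  have hS : S.PosSemidef := by
    open scoped MatrixOrder in exact (CFC.sqrt_nonneg H).posSemidef
  have hSS : S * S = H := by
    open scoped MatrixOrder in exact CFC.sqrt_mul_sqrt_self H hS0.nonneg
  have hdet : IsUnit S.det := by
    have hd : S.det * S.det = H.det := by rw [← det_mul, hSS]
    have hHdet := hH.det_pos
    refine isUnit_iff_ne_zero.mpr fun h => ?_
    rw [h, mul_zero] at hd
    rw [← hd] at hHdet
    exact lt_irrefl 0 hHdet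
  set T := S⁻¹ with hT
  have hTS : T * S = 1 := nonsing_inv_mul S hdet
  have hST : S * T = 1 := mul_nonsing_inv S hdet
  have hTherm : Tᴴ = T := hS.isHermitian.inv
  set N := T * M * T with hN
  have hNpsd : N.PosSemidef := by
    have := hHG.conjTranspose_mul_mul_same T
    rwa [hTherm] at this
  have htr : (H⁻¹ * M).trace = N.trace := by
    have hHinv : H⁻¹ = T * T := by rw [← hSS, Matrix.mul_inv_rev]
    rw [hHinv, hN, Matrix.mul_assoc, trace_mul_comm]
  have key : T * H * T = 1 := by
    rw [← hSS, show T * (S * S) * T = (T * S) * (S * T) by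
      simp [Matrix.mul_assoc], hTS, hST, one_mul]
  constructor
  · have hcore := psd_sub_le_trace hNpsd
    have hconj := hcore.mul_mul_conjTranspose_same S
    rw [hS.isHermitian] at hconj
    have h1 : S * N * S = M := by
      rw [hN, show S * (T * M * T) * S = (S * T) * M * (T * S) by
        simp [Matrix.mul_assoc], hST, hTS, one_mul, Matrix.mul_one]
    have hexp : S * (N.trace • (1 : Matrix (Fin d) (Fin d) ℝ) - N) * S
        = (1 + (H⁻¹ * M).trace) • H - G := by
      rw [htr, Matrix.mul_sub, Matrix.sub_mul, Matrix.mul_smul, Matrix.smul_mul,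
        Matrix.mul_one, hSS, h1, hM]
      module
    rwa [hexp] at hconj
  · intro η hη hpsd
    have h2 := hpsd.conjTranspose_mul_mul_same T
    rw [hTherm] at h2
    have keyG : T * G * T = N + 1 := by
      have hG' : G = M + H := by rw [hM]; abel
      rw [hG', Matrix.mul_add, Matrix.add_mul, key, hN]
    have hexp2 : T * (η • H - G) * T = (η - 1) • (1 : Matrix (Fin d) (Fin d) ℝ) - N := by
      rw [Matrix.mul_sub, Matrix.sub_mul, Matrix.mul_smul, Matrix.smul_mul, key, keyG]
      module
    rw [hexp2] at h2
    have h3 := aux_trace_nonneg h2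
    rw [trace_sub, trace_smul, trace_one] at h3
    rw [htr]
    simp only [smul_eq_mul, Fintype.card_fin] at h3
    linarith
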